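/- For the diffusion-based SSL model g(L) = H·Y_L, the entrywise L1 distance between the nominal and anomaly-affected expected label-distribution matrices satisfies ‖P_N − P_A‖₁ = (f_A / |L̄ᶜ_S|) · ‖ (K/(N−K)) · Σ_{n ∉ A} h_n·y_nᵀ − Σ_{n ∈ A} h_n·y_nᵀ ‖₁, where f_A = C(N−1, S−1) and h_n·y_nᵀ denotes the outer product of the n-th column of H with the label row vector y_n. (Corollary 1) -/

import Mathlib

open Finset

/-- The entrywise L1 norm of a real `N × C` matrix: the sum of the absolute
values of its entries. -/
noncomputable def entryL1 {N C : ℕ} (Z : Matrix (Fin N) (Fin C) ℝ) : ℝ :=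
  ∑ i, ∑ j, |Z i j|

lemma card_filter_mem_powersetCard {α : Type*} [DecidableEq α] (T : Finset α) (s : ℕ)
    {n : α} (hn : n ∈ T) :
    ((Finset.powersetCard (s+1) T).filter (fun L => n ∈ L)).card
      = (T.card - 1).choose s := by
  rw [← Finset.card_erase_of_mem hn, ← Finset.card_powersetCard]
  apply Finset.card_nbij' (fun L => L.erase n) (fun L => insert n L)
  · intro L hL
    simp only [Finset.mem_coe, Finset.mem_filter, Finset.mem_powersetCard] at hL
    simp only [Finset.mem_coe, Finset.mem_powersetCard]
    exact ⟨Finset.erase_subset_erase n hL.1.1,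
      by rw [Finset.card_erase_of_mem hL.2, hL.1.2]; omega⟩
  · intro L hL
    simp only [Finset.mem_coe, Finset.mem_powersetCard] at hL
    have hnL : n ∉ L := fun h => (Finset.notMem_erase n T) (hL.1 h)
    simp only [Finset.mem_coe, Finset.mem_filter, Finset.mem_powersetCard]
    refine ⟨⟨Finset.insert_subset hn (hL.1.trans (Finset.erase_subset n T)), ?_⟩,
      Finset.mem_insert_self n L⟩
    rw [Finset.card_insert_of_notMem hnL, hL.2]
  · intro L hL
    simp only [Finset.mem_coe, Finset.mem_filter] at hL
    exact Finset.insert_erase hL.2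
  · intro L hL
    simp only [Finset.mem_coe, Finset.mem_powersetCard] at hL
    exact Finset.erase_insert (fun h => (Finset.notMem_erase n T) (hL.1 h))

lemma sum_powersetCard_sum {α M : Type*} [DecidableEq α] [AddCommMonoid M]
    (T : Finset α) (s : ℕ) (f : α → M) :
    ∑ L ∈ Finset.powersetCard (s+1) T, ∑ n ∈ L, f n
      = (T.card - 1).choose s • ∑ n ∈ T, f n := by
  have h1 : ∀ L ∈ Finset.powersetCard (s+1) T, ∑ n ∈ L, f n
      = ∑ n ∈ T, if n ∈ L then f n else 0 := by
    intro L hL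
    rw [Finset.sum_ite_mem]
    rw [Finset.mem_powersetCard] at hL
    rw [Finset.inter_eq_right.2 hL.1]
  rw [Finset.sum_congr rfl h1, Finset.sum_comm, Finset.smul_sum]
  refine Finset.sum_congr rfl fun n hn => ?_
  rw [Finset.sum_ite, Finset.sum_const_zero, add_zero, Finset.sum_const,
    card_filter_mem_powersetCard T s hn]

lemma choose_lt_choose_of_lt {m n s : ℕ} (hs : 1 ≤ s) (hsm : s ≤ m) (hmn : m < n) :
    m.choose s < n.choose s := by
  have h1 : m.choose s < (m+1).choose s := by
    obtain ⟨t, rfl⟩ : ∃ t, s = t + 1 := ⟨s - 1, by omega⟩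
    rw [Nat.choose_succ_succ' m t]
    have := Nat.choose_pos (show t ≤ m from (by omega : t ≤ m))
    omega
  exact lt_of_lt_of_le h1 (Nat.choose_le_choose s hmn)

/-- **Corollary 1 (GraphSAC, diffusion-based SSL).** For the diffusion-based
SSL model `g(L) = H·Y_L`, the entrywise L1 distance between the nominal and
anomaly-affected expected label-distribution matrices satisfies
`‖P_N − P_A‖₁ = (f_A/|L̄ᶜ_S|) · ‖(K/(N−K))·Σ_{n∉A} h_n·y_nᵀ − Σ_{n∈A} h_n·y_nᵀ‖₁`,
where `f_A = C(N−1, S−1)` and `h_n·y_nᵀ` is the outer product of the `n`-th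
column of `H` with the label row vector `y_n`. -/
theorem graphsac_corollary1 {N C K S : ℕ}
    (hK : 1 ≤ K) (hS : 1 ≤ S) (hSNK : S ≤ N - K)
    (A : Finset (Fin N)) (hA : A.card = K)
    (y : Fin N → Fin C → ℝ)
    (Y : Finset (Fin N) → Matrix (Fin N) (Fin C) ℝ)
    (hY : ∀ L, Y L = Matrix.of fun n c => if n ∈ L then y n c else 0)
    (H : Matrix (Fin N) (Fin N) ℝ)
    (g : Finset (Fin N) → Matrix (Fin N) (Fin C) ℝ)
    (hg : ∀ L, g L = H * Y L)
    (LS LbarS LbarcS : Finset (Finset (Fin N)))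
    (hLS : LS = Finset.powersetCard S (Finset.univ : Finset (Fin N)))
    (hLbarS : LbarS = LS.filter (fun L => L ∩ A = ∅))
    (hLbarcS : LbarcS = LS \ LbarS)
    (PN PA : Matrix (Fin N) (Fin C) ℝ)
    (hPN : PN = ((LbarS.card : ℝ))⁻¹ • ∑ L ∈ LbarS, g L)
    (hPA : PA = ((LbarcS.card : ℝ))⁻¹ • ∑ L ∈ LbarcS, g L) :
    entryL1 (PN - PA) =
      (((N - 1).choose (S - 1) : ℝ) / (LbarcS.card : ℝ)) *
        entryL1 (((K : ℝ) / ((N - K : ℕ) : ℝ)) •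
            ∑ n ∈ Aᶜ, Matrix.vecMulVec (fun i => H i n) (y n) -
          ∑ n ∈ A, Matrix.vecMulVec (fun i => H i n) (y n)) := by
  -- basic setup
  set B : Fin N → Matrix (Fin N) (Fin C) ℝ :=
    fun n => Matrix.vecMulVec (fun i => H i n) (y n) with hB
  obtain ⟨s, rfl⟩ : ∃ s, S = s + 1 := ⟨S - 1, by omega⟩
  set M := N - K with hM
  have hMN : M < N := by omega
  have hKA : K ≤ N := by omega
  have hNpos : 1 ≤ N := by omega
  -- g L as a sum of outer products
  have hgB : ∀ L, g L = ∑ n ∈ L, B n := by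
    intro L
    ext i c
    rw [hg, hY]
    simp only [Matrix.mul_apply, Matrix.of_apply, Finset.sum_apply, Matrix.sum_apply,
      Matrix.vecMulVec_apply, hB, mul_ite, mul_zero]
    rw [Finset.sum_ite_mem, Finset.univ_inter]
  -- LbarS is the powerset of the complement
  have hLbarS' : LbarS = Finset.powersetCard (s+1) Aᶜ := by
    rw [hLbarS, hLS]
    ext L
    simp only [Finset.mem_filter, Finset.mem_powersetCard, Finset.subset_univ, true_and]
    constructor
    · rintro ⟨hc, hd⟩
      exact ⟨fun x hx => Finset.mem_compl.2 fun hxA =>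
        (Finset.notMem_empty x) (hd ▸ Finset.mem_inter.2 ⟨hx, hxA⟩), hc⟩
    · rintro ⟨hsub, hc⟩
      refine ⟨hc, Finset.eq_empty_of_forall_notMem fun x hx => ?_⟩
      rw [Finset.mem_inter] at hx
      exact (Finset.mem_compl.1 (hsub hx.1)) hx.2
  have hAc : Aᶜ.card = M := by
    rw [Finset.card_compl, hA]; simp [hM]
  have hLbarSsub : LbarS ⊆ LS := hLbarS ▸ Finset.filter_subset _ _
  have hcardLbarS : LbarS.card = M.choose (s+1) := by
    rw [hLbarS', Finset.card_powersetCard, hAc]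
  have hcardLS : LS.card = N.choose (s+1) := by
    rw [hLS, Finset.card_powersetCard, Finset.card_univ, Fintype.card_fin]
  have hcardlt : M.choose (s+1) < N.choose (s+1) :=
    choose_lt_choose_of_lt (by omega) hSNK hMN
  have hcardLbarcS : LbarcS.card = N.choose (s+1) - M.choose (s+1) := by
    rw [hLbarcS, Finset.card_sdiff_of_subset hLbarSsub, hcardLS, hcardLbarS]
  -- sums
  set SA : Matrix (Fin N) (Fin C) ℝ := ∑ n ∈ A, B n with hSA
  set SC : Matrix (Fin N) (Fin C) ℝ := ∑ n ∈ Aᶜ, B n with hSC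
  have hsumclean : ∑ L ∈ LbarS, g L = (M - 1).choose s • SC := by
    rw [hLbarS']
    simp_rw [hgB]
    rw [sum_powersetCard_sum, hAc]
  have hsumall : ∑ L ∈ LS, g L = (N - 1).choose s • (SA + SC) := by
    rw [hLS]
    simp_rw [hgB]
    rw [sum_powersetCard_sum, Finset.card_univ, Fintype.card_fin]
    congr 1
    rw [hSA, hSC, Finset.sum_add_sum_compl]
  have hsumdirty : ∑ L ∈ LbarcS, g L
      = (N - 1).choose s • (SA + SC) - (M - 1).choose s • SC := by
    rw [hLbarcS, Finset.sum_sdiff_eq_sub hLbarSsub, hsumall, hsumclean]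
  -- scalars
  set f : ℝ := ((N - 1).choose s : ℝ) with hf
  set cb : ℝ := (M.choose (s+1) : ℝ) with hcb
  set cb1 : ℝ := ((M - 1).choose s : ℝ) with hcb1
  set cc : ℝ := (LbarcS.card : ℝ) with hcc
  have hccval : cc = (N.choose (s+1) : ℝ) - cb := by
    rw [hcc, hcardLbarcS, Nat.cast_sub (le_of_lt hcardlt), hcb]
  have hccpos : 0 < cc := by
    rw [hccval, sub_pos, hcb]
    exact_mod_cast hcardlt
  have hcbpos : (0:ℝ) < cb := by
    rw [hcb]; exact_mod_cast Nat.choose_pos hSNK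
  have hMpos : (0:ℝ) < (M:ℝ) := by exact_mod_cast (by omega : 0 < M)
  have h1 : (M:ℝ) * cb1 = cb * (s+1) := by
    have h := Nat.add_one_mul_choose_eq (M-1) s
    have hM1 : M - 1 + 1 = M := by omega
    rw [hM1] at h
    rw [hcb1, hcb]
    exact_mod_cast h
  have h2 : (N:ℝ) * f = (N.choose (s+1) : ℝ) * (s+1) := by
    have h := Nat.add_one_mul_choose_eq (N-1) s
    have hN1 : N - 1 + 1 = N := by omega
    rw [hN1] at h
    rw [hf]
    exact_mod_cast h
  have hNMK : (N:ℝ) = (M:ℝ) + (K:ℝ) := by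
    have : N = M + K := by omega
    exact_mod_cast this
  -- the key matrix identity
  have key : PN - PA = (f / cc) • (((K:ℝ) / (M:ℝ)) • SC - SA) := by
    rw [hPN, hPA, hsumclean, hsumdirty, hcardLbarS]
    rw [← Nat.cast_smul_eq_nsmul ℝ ((M-1).choose s) SC,
      ← Nat.cast_smul_eq_nsmul ℝ ((N-1).choose s) (SA + SC), ← hcb1, ← hf, ← hcb]
    match_scalars
    · field_simp
      linear_combination (cc + cb) * h1 + cb * ((s:ℝ)+1) * hccval +
        cb * f * hNMK - cb * h2
    · field_simp
      try ring
  rw [key]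
  have habs : ∀ (c : ℝ) (Z : Matrix (Fin N) (Fin C) ℝ), 0 ≤ c →
      entryL1 (c • Z) = c * entryL1 Z := by
    intro c Z hc
    simp only [entryL1, Matrix.smul_apply, smul_eq_mul, abs_mul, abs_of_nonneg hc,
      Finset.mul_sum]
  rw [habs _ _ (div_nonneg (by positivity) (le_of_lt hccpos))]
  rfl
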